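/- Let X ∈ B(L²(𝕋)). Then X is a transposed paired operator, i.e. X = P₊ M_φ + P₋ M_ψ for some φ, ψ ∈ L∞(𝕋), if and only if X = P₊ M_z* X M_z + P₋ M_z X M_z*. Moreover, in that case the representing functions φ and ψ are unique (as elements of L∞(𝕋)). -/

import Mathlib

open MeasureTheory Complex AddCircle
open scoped InnerProductSpace ENNReal Real

noncomputable section

namespace PaperTH

instance fact2pi : Fact (0 < 2 * Real.pi) := ⟨by positivity⟩

/-- The circle, as `ℝ / 2πℤ`. -/
abbrev 𝕋c := AddCircle (2 * Real.pi)

/-- The normalized Lebesgue (Haar) measure on the circle. -/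
abbrev μc : Measure 𝕋c := haarAddCircle

/-- `L²(𝕋)`. -/
abbrev L2 := Lp ℂ 2 μc

/-- The Hardy space `H²(𝕋)`: members of `L²(𝕋)` all of whose Fourier coefficients of
negative index vanish. -/
def Hardy : Submodule ℂ L2 where
  carrier := {f | ∀ n : ℤ, n < 0 → fourierCoeff (⇑f) n = 0}
  add_mem' := by
    intro f g hf hg n hn
    have hf' := hf n hn
    have hg' := hg n hn
    rw [← fourierBasis_repr] at hf' hg' ⊢
    rw [map_add, lp.coeFn_add, Pi.add_apply, hf', hg', add_zero]
  zero_mem' := by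
    intro n hn
    rw [← fourierBasis_repr, map_zero, lp.coeFn_zero, Pi.zero_apply]
  smul_mem' := by
    intro c f hf n hn
    have hf' := hf n hn
    rw [← fourierBasis_repr] at hf' ⊢
    rw [_root_.map_smul, lp.coeFn_smul, Pi.smul_apply, hf', smul_zero]

theorem isClosed_Hardy : IsClosed (Hardy : Set L2) := by
  have h : (Hardy : Set L2) =
      ⋂ (n : ℤ) (_ : n < 0), ((innerSL ℂ (fourierBasis n)) ⁻¹' {(0 : ℂ)}) := by
    ext f
    simp only [Set.mem_iInter, Set.mem_preimage, Set.mem_singleton_iff, SetLike.mem_coe]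
    constructor
    · intro hf n hn
      have := hf n hn
      rw [← fourierBasis_repr, fourierBasis.repr_apply_apply] at this
      simpa using this
    · intro hf n hn
      have := hf n hn
      rw [← fourierBasis_repr, fourierBasis.repr_apply_apply]
      simpa using this
  rw [h]
  exact isClosed_iInter fun n => isClosed_iInter fun _ =>
    (isClosed_singleton).preimage (innerSL ℂ (fourierBasis n)).continuous

instance : CompleteSpace Hardy := isClosed_Hardy.completeSpace_coe

/-- The Szegő projection `P₊ : L²(𝕋) → L²(𝕋)` onto the Hardy space. -/
def Pplus : L2 →L[ℂ] L2 := Hardy.subtypeL.comp (Submodule.orthogonalProjectionOnto Hardy)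

/-- `P₋ = I - P₊`. -/
def Pminus : L2 →L[ℂ] L2 := ContinuousLinearMap.id ℂ L2 - Pplus

/-- Underlying function of the multiplication operator. -/
def MopFun (φ : 𝕋c → ℂ) (hφ : MemLp φ ∞ μc) (f : L2) : L2 :=
  ((Lp.memLp f).smul hφ).toLp (φ • ⇑f)

theorem MopFun_coeFn (φ : 𝕋c → ℂ) (hφ : MemLp φ ∞ μc) (f : L2) :
    ⇑(MopFun φ hφ f) =ᵐ[μc] φ • ⇑f := MemLp.coeFn_toLp _

theorem MopFun_add (φ : 𝕋c → ℂ) (hφ : MemLp φ ∞ μc) (f g : L2) :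
    MopFun φ hφ (f + g) = MopFun φ hφ f + MopFun φ hφ g := by
  apply Lp.ext
  filter_upwards [MopFun_coeFn φ hφ (f + g), MopFun_coeFn φ hφ f, MopFun_coeFn φ hφ g,
    Lp.coeFn_add f g, Lp.coeFn_add (MopFun φ hφ f) (MopFun φ hφ g)] with x h1 h2 h3 h4 h5
  simp only [h1, h5, Pi.add_apply, h2, h3, Pi.smul_apply, Pi.mul_apply, smul_eq_mul, h4]
  ring

theorem MopFun_smul (φ : 𝕋c → ℂ) (hφ : MemLp φ ∞ μc) (c : ℂ) (f : L2) :
    MopFun φ hφ (c • f) = c • MopFun φ hφ f := by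
  apply Lp.ext
  filter_upwards [MopFun_coeFn φ hφ (c • f), MopFun_coeFn φ hφ f,
    Lp.coeFn_smul c f, Lp.coeFn_smul c (MopFun φ hφ f)] with x h1 h2 h3 h4
  simp only [h1, h4, Pi.smul_apply, Pi.mul_apply, h2, h3, smul_eq_mul]
  ring

theorem MopFun_norm (φ : 𝕋c → ℂ) (hφ : MemLp φ ∞ μc) (f : L2) :
    ‖MopFun φ hφ f‖ ≤ (eLpNorm φ ∞ μc).toReal * ‖f‖ := by
  have hrfl : MopFun φ hφ f = ((Lp.memLp f).smul hφ).toLp (φ • ⇑f) := rfl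
  rw [hrfl, Lp.norm_toLp (φ • ⇑f) ((Lp.memLp f).smul hφ), Lp.norm_def]
  have hb : eLpNorm (φ • ⇑f) 2 μc ≤ eLpNorm φ ∞ μc * eLpNorm (⇑f) 2 μc :=
    eLpNorm_smul_le_eLpNorm_top_mul_eLpNorm 2 (Lp.aestronglyMeasurable f) φ
  have hfin : eLpNorm φ ∞ μc * eLpNorm (⇑f) 2 μc ≠ ∞ :=
    ENNReal.mul_ne_top hφ.eLpNorm_ne_top (Lp.eLpNorm_ne_top f)
  calc (eLpNorm (φ • ⇑f) 2 μc).toReal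
      ≤ (eLpNorm φ ∞ μc * eLpNorm (⇑f) 2 μc).toReal := ENNReal.toReal_mono hfin hb
    _ = (eLpNorm φ ∞ μc).toReal * (eLpNorm (⇑f) 2 μc).toReal := ENNReal.toReal_mul

/-- The multiplication (Laurent) operator `M_φ` on `L²(𝕋)` with symbol `φ ∈ L∞(𝕋)`. -/
def Mop (φ : 𝕋c → ℂ) (hφ : MemLp φ ∞ μc) : L2 →L[ℂ] L2 :=
  LinearMap.mkContinuous
    { toFun := MopFun φ hφ
      map_add' := MopFun_add φ hφ
      map_smul' := MopFun_smul φ hφ }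
    (eLpNorm φ ∞ μc).toReal
    (fun f => MopFun_norm φ hφ f)

theorem Mop_coeFn (φ : 𝕋c → ℂ) (hφ : MemLp φ ∞ μc) (f : L2) :
    ⇑(Mop φ hφ f) =ᵐ[μc] fun x => φ x * f x :=
  MopFun_coeFn φ hφ f

/-- The conjugation operator `J : L²(𝕋) → L²(𝕋)`, `(Jf)(z) = f(z̄)`
(composition with `x ↦ -x` on the additive circle). -/
def Jop : L2 →L[ℂ] L2 :=
  LinearMap.mkContinuous
    { toFun := fun f =>
        Lp.compMeasurePreserving (fun x : 𝕋c => -x) (Measure.measurePreserving_neg μc) f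
      map_add' := by
        intro f g
        exact map_add (Lp.compMeasurePreserving _ (Measure.measurePreserving_neg μc)) f g
      map_smul' := by
        intro c f
        apply Lp.ext
        simp only [RingHom.id_apply]
        have hmp := Measure.measurePreserving_neg (μ := μc)
        have h1 := Lp.coeFn_compMeasurePreserving (μ := μc) (c • f) hmp
        have h2 := Lp.coeFn_compMeasurePreserving (μ := μc) f hmp
        have h3 : ⇑(c • f) ∘ (fun x : 𝕋c => -x) =ᵐ[μc] (c • ⇑f) ∘ (fun x : 𝕋c => -x) :=
          hmp.quasiMeasurePreserving.ae_eq_comp (Lp.coeFn_smul c f)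
        have h4 : (c • ⇑f) ∘ (fun x : 𝕋c => -x) = c • (⇑f ∘ fun x : 𝕋c => -x) := rfl
        have h5 : c • (⇑f ∘ fun x : 𝕋c => -x) =ᵐ[μc]
            c • ⇑(Lp.compMeasurePreserving (fun x : 𝕋c => -x) hmp f) :=
          h2.symm.const_smul c
        exact ((h1.trans h3).trans ((h4 ▸ h5 : _))).trans (Lp.coeFn_smul c _).symm }
    1
    (by
      intro f
      simp only [LinearMap.coe_mk, AddHom.coe_mk, one_mul]
      exact le_of_eq (Lp.norm_compMeasurePreserving f _))

/-- The Toeplitz operator `T_φ = P₊ M_φ |_{H²}` with symbol `φ ∈ L∞(𝕋)`. -/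
def Toep (φ : 𝕋c → ℂ) (hφ : MemLp φ ∞ μc) : Hardy →L[ℂ] Hardy :=
  (Submodule.orthogonalProjectionOnto Hardy).comp ((Mop φ hφ).comp Hardy.subtypeL)

/-- The Hankel operator `H_φ = P₊ M_φ J |_{H²}` with symbol `φ ∈ L∞(𝕋)`. -/
def Hank (φ : 𝕋c → ℂ) (hφ : MemLp φ ∞ μc) : Hardy →L[ℂ] Hardy :=
  (Submodule.orthogonalProjectionOnto Hardy).comp ((Mop φ hφ).comp (Jop.comp Hardy.subtypeL))

/-- The coordinate function `z` on the circle. -/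
def zFun : 𝕋c → ℂ := fun x => fourier 1 x

theorem zFun_memℒp : MemLp zFun ∞ μc := by
  refine memLp_top_of_bound ((fourier 1).continuous.aestronglyMeasurable) 1
    (Filter.Eventually.of_forall fun x => ?_)
  simp only [zFun, fourier_apply, Circle.norm_coe, le_refl]

/-- The unilateral shift `T_z`. -/
def Tz : Hardy →L[ℂ] Hardy := Toep zFun zFun_memℒp

/-- The bilateral shift `M_z` on `L²(𝕋)`. -/
def Mz : L2 →L[ℂ] L2 := Mop zFun zFun_memℒp

/-- `A` is a Toeplitz + Hankel operator. -/
def IsToepPlusHank (A : Hardy →L[ℂ] Hardy) : Prop :=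
  ∃ (φ ψ : 𝕋c → ℂ) (hφ : MemLp φ ∞ μc) (hψ : MemLp ψ ∞ μc), A = Toep φ hφ + Hank ψ hψ

/-- `φ` belongs to `H^∞`: it is essentially bounded and all its negative Fourier
coefficients vanish. -/
def IsHinf (φ : 𝕋c → ℂ) : Prop :=
  MemLp φ ∞ μc ∧ ∀ n : ℤ, n < 0 → fourierCoeff φ n = 0

/-- `θ` is an inner function: `θ ∈ H^∞` and `|θ| = 1` a.e. on the circle. -/
def IsInner (θ : 𝕋c → ℂ) : Prop :=
  IsHinf θ ∧ ∀ᵐ x ∂μc, ‖θ x‖ = 1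

theorem Mop_norm_of_inner {θ : 𝕋c → ℂ} (hθ : IsInner θ) (f : L2) :
    ‖Mop θ hθ.1.1 f‖ = ‖f‖ := by
  have h1 : ⇑(Mop θ hθ.1.1 f) =ᵐ[μc] θ • ⇑f := MopFun_coeFn θ hθ.1.1 f
  rw [Lp.norm_def, Lp.norm_def]
  congr 1
  rw [eLpNorm_congr_ae h1]
  apply eLpNorm_congr_norm_ae
  filter_upwards [hθ.2] with x hx
  simp [norm_smul, hx]

/-- The (Beurling-type) subspace `θ H²` of the Hardy space, for an inner function `θ`. -/
def thetaSub (θ : 𝕋c → ℂ) (hθ : IsInner θ) : Submodule ℂ Hardy where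
  carrier := {f | ∃ g : Hardy, (f : L2) = Mop θ hθ.1.1 (g : L2)}
  add_mem' := by
    rintro f f' ⟨g, hg⟩ ⟨g', hg'⟩
    exact ⟨g + g', by
      simp only [Submodule.coe_add, hg, hg']
      rw [← map_add]⟩
  zero_mem' := ⟨0, by simp⟩
  smul_mem' := by
    rintro c f ⟨g, hg⟩
    exact ⟨c • g, by
      rw [Submodule.coe_smul, hg, ← (Mop θ hθ.1.1).map_smul]
      rfl⟩

theorem isClosed_thetaSub (θ : 𝕋c → ℂ) (hθ : IsInner θ) :
    IsClosed ((thetaSub θ hθ) : Set Hardy) := by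
  have hiso : Isometry (fun g : Hardy => Mop θ hθ.1.1 (g : L2)) := by
    apply Isometry.of_dist_eq
    intro g g'
    rw [dist_eq_norm, dist_eq_norm, ← map_sub, ← Submodule.coe_sub, Mop_norm_of_inner hθ]
    rfl
  have hrange : IsClosed (Set.range fun g : Hardy => Mop θ hθ.1.1 (g : L2)) :=
    hiso.isClosedEmbedding.isClosed_range
  have hset : ((thetaSub θ hθ) : Set Hardy) =
      (Subtype.val) ⁻¹' (Set.range fun g : Hardy => Mop θ hθ.1.1 (g : L2)) := by
    ext f
    constructor
    · rintro ⟨g, hg⟩; exact ⟨g, hg.symm⟩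
    · rintro ⟨g, hg⟩; exact ⟨g, hg.symm⟩
  rw [hset]
  exact hrange.preimage continuous_subtype_val

/-- The model space `𝒦_θ = H² ⊖ θH²`. -/
def modelSpace (θ : 𝕋c → ℂ) (hθ : IsInner θ) : Submodule ℂ Hardy := (thetaSub θ hθ)ᗮ

/-- The orthogonal projection of `H²` onto `θH²`. -/
def Ptheta (θ : 𝕋c → ℂ) (hθ : IsInner θ) : Hardy →L[ℂ] Hardy :=
  haveI : CompleteSpace (thetaSub θ hθ) := (isClosed_thetaSub θ hθ).completeSpace_coe
  (thetaSub θ hθ).subtypeL.comp (Submodule.orthogonalProjectionOnto (thetaSub θ hθ))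

/-- The orthogonal projection of `H²` onto the model space `𝒦_θ`. -/
def Pmodel (θ : 𝕋c → ℂ) (hθ : IsInner θ) : Hardy →L[ℂ] Hardy :=
  haveI hc : CompleteSpace (thetaSub θ hθ) := (isClosed_thetaSub θ hθ).completeSpace_coe
  haveI h2 : Submodule.HasOrthogonalProjection (modelSpace θ hθ) :=
    (inferInstance : Submodule.HasOrthogonalProjection (thetaSub θ hθ)ᗮ)
  (modelSpace θ hθ).subtypeL.comp (Submodule.orthogonalProjectionOnto (modelSpace θ hθ))

/-- The monomial `z^k`, as an element of the Hardy space. -/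
def monoH (k : ℕ) : Hardy :=
  ⟨fourierLp 2 (k : ℤ), by
    intro n hn
    rw [← fourierBasis_repr]
    have hb : (fourierLp 2 (k : ℤ) : L2) = fourierBasis (k : ℤ) := by rw [coe_fourierBasis]
    rw [hb, fourierBasis.repr_self]
    exact lp.single_apply_ne 2 (k : ℤ) _ (by omega)⟩

/-- `T_z^*`, the adjoint of the unilateral shift. -/
def TzStar : Hardy →L[ℂ] Hardy := ContinuousLinearMap.adjoint Tz

/-- `M_z^*`, the adjoint of the bilateral shift. -/
def MzStar : L2 →L[ℂ] L2 := ContinuousLinearMap.adjoint Mz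

/-- The constant function `1` as an element of `L²(𝕋)`. -/
def oneL2 : L2 := (memLp_const (1 : ℂ)).toLp (fun _ => (1 : ℂ))

/-- The function `z̄ = conj z` on the circle. -/
def zbarFun : 𝕋c → ℂ := fun x => fourier (-1) x

theorem zbarFun_memℒp : MemLp zbarFun ∞ μc := by
  refine memLp_top_of_bound ((fourier (-1)).continuous.aestronglyMeasurable) 1
    (Filter.Eventually.of_forall fun x => ?_)
  simp only [zbarFun, fourier_apply, Circle.norm_coe, le_refl]

/-- The function `z̄` as an element of `L²(𝕋)`. -/
def zbarL2 : L2 := (zbarFun_memℒp.mono_exponent le_top).toLp zbarFun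

theorem zbarsq_memℒp {ψ : 𝕋c → ℂ} (hψ : MemLp ψ ∞ μc) :
    MemLp (fun x : 𝕋c => ((starRingEnd ℂ) (zFun x) ^ 2 - 1) * ψ x) ∞ μc := by
  have hc : Continuous fun x : 𝕋c => (starRingEnd ℂ) (zFun x) ^ 2 - 1 := by
    have h1 : Continuous (zFun) := (fourier 1).continuous
    exact ((h1.star.pow 2).sub continuous_const)
  have hb : MemLp (fun x : 𝕋c => (starRingEnd ℂ) (zFun x) ^ 2 - 1) ∞ μc := by
    refine memLp_top_of_bound hc.aestronglyMeasurable 2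
      (Filter.Eventually.of_forall fun x => ?_)
    calc ‖(starRingEnd ℂ) (zFun x) ^ 2 - 1‖ ≤ ‖(starRingEnd ℂ) (zFun x) ^ 2‖ + ‖(1 : ℂ)‖ :=
          norm_sub_le _ _
      _ ≤ 2 := by
          rw [norm_pow, RCLike.norm_conj]
          simp only [zFun, fourier_apply, Circle.norm_coe, norm_one]
          norm_num
  have h2 := hψ.smul (r := ∞) hb
  have h3 : ((fun x : 𝕋c => (starRingEnd ℂ) (zFun x) ^ 2 - 1) • ψ) =
      fun x : 𝕋c => ((starRingEnd ℂ) (zFun x) ^ 2 - 1) * ψ x := by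
    funext x
    simp only [Pi.smul_apply, smul_eq_mul, Pi.mul_apply]
  exact h3 ▸ h2

/-- `A` is `θ`-paired: `A = T_φ P_{θH²} + T_ψ P_{𝒦_θ}` for some `φ, ψ ∈ H^∞`. -/
def IsThetaPaired (θ : 𝕋c → ℂ) (hθ : IsInner θ) (X : Hardy →L[ℂ] Hardy) : Prop :=
  ∃ (φ ψ : 𝕋c → ℂ) (hφ : IsHinf φ) (hψ : IsHinf ψ),
    X = (Toep φ hφ.1).comp (Ptheta θ hθ) + (Toep ψ hψ.1).comp (Pmodel θ hθ)



section AuxCoeff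

open Filter

/-- The Fourier Hilbert basis of `L2`, as an abbreviation. -/
noncomputable def eB : HilbertBasis ℤ ℂ L2 := @fourierBasis (2 * Real.pi) fact2pi

lemma fourierCoeff_congr_ae {f g : 𝕋c → ℂ} (h : f =ᵐ[μc] g) (n : ℤ) :
    fourierCoeff f n = fourierCoeff g n :=
  integral_congr_ae (h.mono fun x hx => by dsimp only; rw [hx])

lemma coeff_mul_fourier (w : 𝕋c → ℂ) (k m : ℤ) :
    fourierCoeff (fun x => w x * fourier k x) m = fourierCoeff w (m - k) := by
  show ∫ t, fourier (-m) t • (w t * fourier k t) ∂μc = ∫ t, fourier (-(m - k)) t • w t ∂μc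
  refine integral_congr_ae (Eventually.of_forall fun x => ?_)
  have h1 : fourier (-(m - k)) x = fourier (-m) x * fourier k x := by
    rw [← fourier_add]; congr 1; ring
  simp only [smul_eq_mul, h1]; ring

lemma repr_eq (f : L2) (m : ℤ) : eB.repr f m = fourierCoeff (⇑f) m := by
  have : eB = @fourierBasis (2 * Real.pi) fact2pi := rfl
  rw [this]; exact fourierBasis_repr f m

lemma basis_eq (n : ℤ) : (eB n : L2) = fourierLp 2 n := by
  have : eB = @fourierBasis (2 * Real.pi) fact2pi := rfl
  rw [this]; exact congrFun coe_fourierBasis n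

lemma coeFn_basis (n : ℤ) : ⇑(eB n : L2) =ᵐ[μc] fourier n := by
  rw [basis_eq]; exact coeFn_fourierLp 2 n

lemma repr_basis (n m : ℤ) : eB.repr (eB n) m = if m = n then 1 else 0 := by
  classical
  rw [eB.repr_self, lp.single_apply]
  by_cases h : m = n
  · subst h; simp
  · simp [h]

lemma basis_mem_Hardy {m : ℤ} (hm : 0 ≤ m) : (eB m : L2) ∈ Hardy := by
  intro n hn
  rw [← repr_eq, repr_basis]
  have : n ≠ m := by omega
  simp [this]

lemma repr_Pplus (f : L2) (m : ℤ) :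
    eB.repr (Pplus f) m = if 0 ≤ m then eB.repr f m else 0 := by
  by_cases hm : 0 ≤ m
  · simp only [hm, if_true]
    have horth := Submodule.sub_starProjection_mem_orthogonal (K := Hardy) f
    have h0 : ⟪(eB m : L2), f - Pplus f⟫_ℂ = 0 := by
      have hP : f - Pplus f ∈ Hardyᗮ := horth
      exact (Submodule.mem_orthogonal Hardy (f - Pplus f)).mp hP (eB m) (basis_mem_Hardy hm)
    have h1 : eB.repr (f - Pplus f) m = 0 := by
      rw [eB.repr_apply_apply]; exact h0
    rw [map_sub, lp.coeFn_sub, Pi.sub_apply] at h1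
    exact (sub_eq_zero.mp h1).symm

  · simp only [hm, if_false]
    have hmem : (Pplus f : L2) ∈ Hardy := (Submodule.orthogonalProjectionOnto Hardy f).2
    rw [repr_eq]
    exact hmem m (by omega)

lemma repr_Pminus (f : L2) (m : ℤ) :
    eB.repr (Pminus f) m = if 0 ≤ m then 0 else eB.repr f m := by
  have : Pminus f = f - Pplus f := rfl
  rw [this, map_sub]
  by_cases hm : 0 ≤ m <;> simp [repr_Pplus, hm]

lemma repr_Mz (f : L2) (m : ℤ) : eB.repr (Mz f) m = eB.repr f (m - 1) := by
  rw [repr_eq, repr_eq]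
  have h1 : ⇑(Mz f) =ᵐ[μc] fun x => zFun x * f x := Mop_coeFn zFun zFun_memℒp f
  rw [fourierCoeff_congr_ae h1]
  have h2 : (fun x => zFun x * f x) = fun x => f x * fourier 1 x := by
    funext x; rw [mul_comm]; rfl
  rw [h2, coeff_mul_fourier]

lemma Mz_basis (n : ℤ) : Mz (eB n : L2) = eB (n + 1) := by
  apply eB.repr.injective
  apply lp.ext
  funext m
  rw [repr_Mz, repr_basis, repr_basis]
  by_cases h : m = n + 1
  · simp [h]
  · have : ¬(m - 1 = n) := by omega
    simp [h, this]

lemma repr_MzStar (f : L2) (m : ℤ) : eB.repr (MzStar f) m = eB.repr f (m + 1) := by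
  rw [eB.repr_apply_apply, eB.repr_apply_apply]
  show ⟪(eB m : L2), ContinuousLinearMap.adjoint Mz f⟫_ℂ = _
  rw [ContinuousLinearMap.adjoint_inner_right, Mz_basis]

lemma MzStar_basis (n : ℤ) : MzStar (eB n : L2) = eB (n - 1) := by
  apply eB.repr.injective
  apply lp.ext
  funext m
  rw [repr_MzStar, repr_basis, repr_basis]
  by_cases h : m = n - 1
  · have : m + 1 = n := by omega
    simp [h, this]
  · have : ¬(m + 1 = n) := by omega
    simp [h, this]

lemma repr_Mop (φ : 𝕋c → ℂ) (hφ : MemLp φ ∞ μc) (n m : ℤ) :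
    eB.repr (Mop φ hφ (eB n)) m = fourierCoeff φ (m - n) := by
  rw [repr_eq]
  have h1 : ⇑(Mop φ hφ (eB n)) =ᵐ[μc] fun x => φ x * (eB n : L2) x := Mop_coeFn φ hφ _
  have h2 : (fun x => φ x * (eB n : L2) x) =ᵐ[μc] fun x => φ x * fourier n x := by
    filter_upwards [coeFn_basis n] with x hx
    rw [hx]
  rw [fourierCoeff_congr_ae (h1.trans h2), coeff_mul_fourier]

lemma clm_ext_basis {T S : L2 →L[ℂ] L2} (h : ∀ n : ℤ, T (eB n) = S (eB n)) : T = S := by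
  have hd : Dense ((Submodule.span ℂ (Set.range ⇑eB) : Submodule ℂ L2) : Set L2) := by
    rw [dense_iff_closure_eq, ← Submodule.topologicalClosure_coe, eB.dense_span]
    rfl
  refine ContinuousLinearMap.ext_on hd ?_
  rintro _ ⟨n, rfl⟩
  exact h n

lemma elt_ext_repr {f g : L2} (h : ∀ m : ℤ, eB.repr f m = eB.repr g m) : f = g := by
  apply eB.repr.injective
  apply lp.ext
  funext m
  exact h m

end AuxCoeff


section MainAux

open Filter

lemma repr_pair (φ ψ : 𝕋c → ℂ) (hφ : MemLp φ ∞ μc) (hψ : MemLp ψ ∞ μc) (n m : ℤ) :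
    eB.repr ((Pplus.comp (Mop φ hφ) + Pminus.comp (Mop ψ hψ)) (eB n)) m
      = if 0 ≤ m then fourierCoeff φ (m - n) else fourierCoeff ψ (m - n) := by
  rw [ContinuousLinearMap.add_apply, map_add, lp.coeFn_add, Pi.add_apply]
  simp only [ContinuousLinearMap.comp_apply]
  rw [repr_Pplus, repr_Pminus, repr_Mop, repr_Mop]
  by_cases hm : 0 ≤ m <;> simp [hm]

lemma repr_RHS (X : L2 →L[ℂ] L2) (n m : ℤ) :
    eB.repr ((Pplus.comp (MzStar.comp (X.comp Mz))
        + Pminus.comp (Mz.comp (X.comp MzStar))) (eB n)) m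
      = if 0 ≤ m then eB.repr (X (eB (n+1))) (m+1) else eB.repr (X (eB (n-1))) (m-1) := by
  rw [ContinuousLinearMap.add_apply, map_add, lp.coeFn_add, Pi.add_apply]
  simp only [ContinuousLinearMap.comp_apply]
  rw [repr_Pplus, repr_Pminus, repr_MzStar, repr_Mz, Mz_basis, MzStar_basis]
  by_cases hm : 0 ≤ m <;> simp [hm]

lemma ae_eq_of_coeff_eq {f g : 𝕋c → ℂ} (hf : MemLp f 2 μc) (hg : MemLp g 2 μc)
    (h : ∀ k : ℤ, fourierCoeff f k = fourierCoeff g k) : f =ᵐ[μc] g := by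
  have h1 : hf.toLp f = hg.toLp g := by
    apply elt_ext_repr
    intro m
    rw [repr_eq, repr_eq, fourierCoeff_congr_ae hf.coeFn_toLp m,
      fourierCoeff_congr_ae hg.coeFn_toLp m]
    exact h m
  have h2 : ⇑(hf.toLp f) =ᵐ[μc] ⇑(hg.toLp g) := by rw [h1]
  exact (hf.coeFn_toLp).symm.trans (h2.trans hg.coeFn_toLp)

lemma uniqueness_aux {φ ψ φ₁ ψ₁ : 𝕋c → ℂ} (hφ : MemLp φ ∞ μc) (hψ : MemLp ψ ∞ μc)
    (hφ₁ : MemLp φ₁ ∞ μc) (hψ₁ : MemLp ψ₁ ∞ μc)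
    (h : Pplus.comp (Mop φ hφ) + Pminus.comp (Mop ψ hψ)
       = Pplus.comp (Mop φ₁ hφ₁) + Pminus.comp (Mop ψ₁ hψ₁)) :
    φ =ᵐ[μc] φ₁ ∧ ψ =ᵐ[μc] ψ₁ := by
  have key : ∀ n m : ℤ, (if 0 ≤ m then fourierCoeff φ (m-n) else fourierCoeff ψ (m-n))
      = if 0 ≤ m then fourierCoeff φ₁ (m-n) else fourierCoeff ψ₁ (m-n) := by
    intro n m
    rw [← repr_pair φ ψ hφ hψ n m, ← repr_pair φ₁ ψ₁ hφ₁ hψ₁ n m, h]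
  constructor
  · apply ae_eq_of_coeff_eq (hφ.mono_exponent le_top) (hφ₁.mono_exponent le_top)
    intro k
    have hm : (0:ℤ) ≤ max k 0 := le_max_right _ _
    have hh := key (max k 0 - k) (max k 0)
    rw [if_pos hm, if_pos hm] at hh
    simpa [show max k 0 - (max k 0 - k) = k by ring] using hh
  · apply ae_eq_of_coeff_eq (hψ.mono_exponent le_top) (hψ₁.mono_exponent le_top)
    intro k
    have hmin : min k (-1) ≤ -1 := min_le_right _ _
    have hm : ¬ (0:ℤ) ≤ min k (-1) := by omega
    have hh := key (min k (-1) - k) (min k (-1))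
    rw [if_neg hm, if_neg hm] at hh
    simpa [show min k (-1) - (min k (-1) - k) = k by ring] using hh

lemma forward_dir {φ ψ : 𝕋c → ℂ} (hφ : MemLp φ ∞ μc) (hψ : MemLp ψ ∞ μc) (X : L2 →L[ℂ] L2)
    (hX : X = Pplus.comp (Mop φ hφ) + Pminus.comp (Mop ψ hψ)) :
    X = Pplus.comp (MzStar.comp (X.comp Mz)) + Pminus.comp (Mz.comp (X.comp MzStar)) := by
  have hrepr : ∀ n m : ℤ, eB.repr (X (eB n)) m
      = if 0 ≤ m then fourierCoeff φ (m - n) else fourierCoeff ψ (m - n) := by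
    intro n m; rw [hX]; exact repr_pair φ ψ hφ hψ n m
  apply clm_ext_basis; intro n; apply elt_ext_repr; intro m
  rw [repr_RHS X n m]
  by_cases hm : 0 ≤ m
  · rw [if_pos hm, hrepr n m, if_pos hm, hrepr (n+1) (m+1),
      if_pos (show (0:ℤ) ≤ m+1 by omega)]
    congr 1
    ring
  · rw [if_neg hm, hrepr n m, if_neg hm, hrepr (n-1) (m-1),
      if_neg (show ¬ (0:ℤ) ≤ m-1 by omega)]
    congr 1
    ring

end MainAux


section Analytic

open Filter Set

lemma hsq2 (X : ℝ≥0∞) : (X ^ (1/(2:ℝ))) ^ (2:ℕ) = X := by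
  rw [← ENNReal.rpow_natCast (X ^ (1/(2:ℝ))) 2, ← ENNReal.rpow_mul]
  norm_num

lemma heLp (f : 𝕋c → ℂ) :
    (eLpNorm f 2 μc) ^ (2:ℕ) = ∫⁻ x, (‖f x‖₊ : ℝ≥0∞) ^ (2:ℕ) ∂μc := by
  rw [eLpNorm_eq_lintegral_rpow_enorm_toReal two_ne_zero ENNReal.ofNat_ne_top]
  simp only [ENNReal.toReal_ofNat]
  rw [hsq2]
  refine lintegral_congr fun x => ?_
  rw [show (2:ℝ) = ((2:ℕ):ℝ) by norm_num, ENNReal.rpow_natCast, enorm_eq_nnnorm]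

lemma ae_bound_of_span_bound (w : 𝕋c → ℂ) (hsm : MeasureTheory.StronglyMeasurable w)
    (hw : MemLp w 2 μc) (C : ℝ) (hC : 0 ≤ C)
    (H : ∀ g : C(𝕋c, ℂ), g ∈ Submodule.span ℂ (Set.range (@fourier (2*Real.pi))) →
      eLpNorm (fun x => w x * g x) 2 μc ≤ ENNReal.ofReal C * eLpNorm (⇑g) 2 μc) :
    ∀ᵐ x ∂μc, ‖w x‖ ≤ C := by
  have hwm : AEStronglyMeasurable w μc := hsm.aestronglyMeasurable
  -- Step 1: extend the bound to all continuous functions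
  have HC : ∀ g : C(𝕋c, ℂ),
      eLpNorm (fun x => w x * g x) 2 μc ≤ ENNReal.ofReal C * eLpNorm (⇑g) 2 μc := by
    intro g
    refine ENNReal.le_of_forall_pos_le_add fun ε hε hfin => ?_
    set K := (eLpNorm w 2 μc).toReal with hKdef
    have hKnn : (0:ℝ) ≤ K := ENNReal.toReal_nonneg
    set δ : ℝ := (ε : ℝ) / (C + K + 1) with hδdef
    have hδpos : 0 < δ := div_pos (by exact_mod_cast hε) (by linarith)
    have hg1 : g ∈ (Submodule.span ℂ (Set.range (@fourier (2*Real.pi)))).topologicalClosure :=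
      (span_fourier_closure_eq_top (T := 2*Real.pi)) ▸ Submodule.mem_top
    have hg_mem : g ∈ closure
        ((Submodule.span ℂ (Set.range (@fourier (2*Real.pi))) : Submodule ℂ C(𝕋c, ℂ)) :
          Set C(𝕋c, ℂ)) := by
      rw [← Submodule.topologicalClosure_coe]; exact hg1
    obtain ⟨p, hp_mem, hp_dist⟩ := Metric.mem_closure_iff.mp hg_mem δ hδpos
    have hbd : ∀ x, ‖g x - p x‖ ≤ δ := by
      intro x
      have h1 : dist (g x) (p x) ≤ dist g p := ContinuousMap.dist_apply_le_dist x
      rw [dist_eq_norm] at h1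
      exact h1.trans hp_dist.le
    have hpae : AEStronglyMeasurable (fun x => w x * p x) μc :=
      hwm.mul p.continuous.aestronglyMeasurable
    have hgpae : AEStronglyMeasurable (fun x => w x * (g x - p x)) μc :=
      hwm.mul (g.continuous.sub p.continuous).aestronglyMeasurable
    have hsplit : (fun x => w x * g x)
        = (fun x => w x * p x) + fun x => w x * (g x - p x) := by
      funext x; simp only [Pi.add_apply]; ring
    have htri : eLpNorm (fun x => w x * g x) 2 μc
        ≤ eLpNorm (fun x => w x * p x) 2 μc + eLpNorm (fun x => w x * (g x - p x)) 2 μc := by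
      rw [hsplit]
      exact eLpNorm_add_le hpae hgpae one_le_two
    have hterm2 : eLpNorm (fun x => w x * (g x - p x)) 2 μc
        ≤ ENNReal.ofReal δ * eLpNorm w 2 μc := by
      have hfe : (fun x => w x * (g x - p x)) = (fun x => g x - p x) • w := by
        funext x; simp [mul_comm]
      rw [hfe]
      refine (eLpNorm_smul_le_eLpNorm_top_mul_eLpNorm 2 hwm _).trans ?_
      refine mul_le_mul_left ?_ _
      have := eLpNorm_le_of_ae_bound (μ := μc) (p := (∞:ℝ≥0∞))
        (f := fun x => g x - p x) (Eventually.of_forall hbd)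
      simpa [measure_univ] using this
    have hgp2 : eLpNorm (fun x => g x - p x) 2 μc ≤ ENNReal.ofReal δ := by
      have := eLpNorm_le_of_ae_bound (μ := μc) (p := (2:ℝ≥0∞))
        (f := fun x => g x - p x) (Eventually.of_forall hbd)
      simpa [measure_univ] using this
    have hp2 : eLpNorm (⇑p) 2 μc ≤ eLpNorm (⇑g) 2 μc + ENNReal.ofReal δ := by
      have hpg : (⇑p : 𝕋c → ℂ) = ⇑g + fun x => p x - g x := by
        funext x; simp
      rw [hpg]
      refine (eLpNorm_add_le g.continuous.aestronglyMeasurable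
        (p.continuous.sub g.continuous).aestronglyMeasurable one_le_two).trans ?_
      refine add_le_add_right ?_ _
      have hneg : (fun x => p x - g x) = -(fun x => g x - p x) := by
        funext x; simp
      rw [show (⇑p - ⇑g : 𝕋c → ℂ) = fun x => p x - g x from rfl, hneg, eLpNorm_neg]
      exact hgp2
    have hterm1 : eLpNorm (fun x => w x * p x) 2 μc
        ≤ ENNReal.ofReal C * eLpNorm (⇑g) 2 μc + ENNReal.ofReal C * ENNReal.ofReal δ := by
      refine (H p hp_mem).trans ?_
      rw [← mul_add]
      exact mul_le_mul_right hp2 _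
    have hwK : eLpNorm w 2 μc = ENNReal.ofReal K := by
      rw [hKdef, ENNReal.ofReal_toReal hw.2.ne]
    have hextra : ENNReal.ofReal C * ENNReal.ofReal δ + ENNReal.ofReal δ * eLpNorm w 2 μc
        ≤ (ε : ℝ≥0∞) := by
      rw [hwK, ← ENNReal.ofReal_mul hC, ← ENNReal.ofReal_mul (by positivity),
        ← ENNReal.ofReal_add (by positivity) (by positivity)]
      rw [show ((ε:ℝ≥0∞)) = ENNReal.ofReal (ε:ℝ) by rw [ENNReal.ofReal_coe_nnreal]]
      refine ENNReal.ofReal_le_ofReal ?_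
      have h1 : C * δ + δ * K = (ε:ℝ) * ((C + K) / (C + K + 1)) := by
        rw [hδdef]; field_simp
      rw [h1]
      have h2 : (C + K) / (C + K + 1) ≤ 1 := by
        rw [div_le_one (by linarith)]; linarith
      calc (ε:ℝ) * ((C + K) / (C + K + 1)) ≤ (ε:ℝ) * 1 :=
            mul_le_mul_of_nonneg_left h2 (ε.coe_nonneg)
        _ = (ε:ℝ) := mul_one _
    calc eLpNorm (fun x => w x * g x) 2 μc
        ≤ (ENNReal.ofReal C * eLpNorm (⇑g) 2 μc + ENNReal.ofReal C * ENNReal.ofReal δ)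
          + ENNReal.ofReal δ * eLpNorm w 2 μc := htri.trans (add_le_add hterm1 hterm2)
      _ = ENNReal.ofReal C * eLpNorm (⇑g) 2 μc
          + (ENNReal.ofReal C * ENNReal.ofReal δ + ENNReal.ofReal δ * eLpNorm w 2 μc) := by ring
      _ ≤ ENNReal.ofReal C * eLpNorm (⇑g) 2 μc + (ε : ℝ≥0∞) := add_le_add_right hextra _
  -- Step 2: test against nonnegative continuous functions
  set D : 𝕋c → ℝ≥0∞ := fun x => (‖w x‖₊ : ℝ≥0∞) ^ (2:ℕ) with hDdef
  have hDm : Measurable D := by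
    have h1 : Measurable w := hsm.measurable
    exact (h1.nnnorm.coe_nnreal_ennreal).pow_const 2
  have H2 : ∀ h : C(𝕋c, ℝ), (∀ x, 0 ≤ h x) →
      ∫⁻ x, D x * ENNReal.ofReal (h x) ∂μc
        ≤ ENNReal.ofReal (C^2) * ∫⁻ x, ENNReal.ofReal (h x) ∂μc := by
    intro h hh
    set g : C(𝕋c, ℂ) := ⟨fun x => ((Real.sqrt (h x) : ℝ) : ℂ),
      Complex.continuous_ofReal.comp (h.continuous.sqrt)⟩ with hgdef
    have hb := HC g
    have hbsq := pow_le_pow_left' hb 2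
    rw [mul_pow, heLp, heLp] at hbsq
    have hg2 : ∀ x, (‖g x‖₊ : ℝ≥0∞) ^ (2:ℕ) = ENNReal.ofReal (h x) := by
      intro x
      rw [← enorm_eq_nnnorm, ← ofReal_norm, ← ENNReal.ofReal_pow (norm_nonneg _)]
      congr 1
      show ‖((Real.sqrt (h x) : ℝ) : ℂ)‖^2 = h x
      rw [Complex.norm_real, Real.norm_eq_abs, _root_.abs_of_nonneg (Real.sqrt_nonneg _),
        Real.sq_sqrt (hh x)]
    have hcg : ∀ x, (‖w x * g x‖₊ : ℝ≥0∞) ^ (2:ℕ) = D x * ENNReal.ofReal (h x) := by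
      intro x
      rw [nnnorm_mul, ENNReal.coe_mul, mul_pow, hg2 x]
    calc ∫⁻ x, D x * ENNReal.ofReal (h x) ∂μc
        = ∫⁻ x, (‖w x * g x‖₊ : ℝ≥0∞) ^ (2:ℕ) ∂μc := (lintegral_congr fun x => (hcg x).symm)
      _ ≤ ENNReal.ofReal C ^ (2:ℕ) * ∫⁻ x, (‖g x‖₊ : ℝ≥0∞) ^ (2:ℕ) ∂μc := hbsq
      _ = ENNReal.ofReal (C^2) * ∫⁻ x, ENNReal.ofReal (h x) ∂μc := by
          rw [← ENNReal.ofReal_pow hC]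
          congr 1
          exact lintegral_congr fun x => hg2 x
  -- Step 3: the density measure
  set ν := μc.withDensity D with hνdef
  have hνfin : IsFiniteMeasure ν := by
    constructor
    rw [hνdef, withDensity_apply _ MeasurableSet.univ, setLIntegral_univ, ← heLp w]
    exact ENNReal.pow_lt_top hw.2
  haveI := hνfin
  have hν_open : ∀ U : Set 𝕋c, IsOpen U → ν U ≤ ENNReal.ofReal (C^2) * μc U := by
    intro U hU
    rw [hU.measure_eq_iSup_isClosed]
    refine iSup_le fun F => iSup_le fun hFU => iSup_le fun hF => ?_
    have hFc : IsCompact F := hF.isCompact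
    have hd : Disjoint F Uᶜ := by
      rw [Set.disjoint_compl_right_iff_subset]
      exact hFU
    obtain ⟨f, hf0, hf1, hficc⟩ :=
      exists_continuous_zero_one_of_isCompact hFc hU.isClosed_compl hd
    set h : C(𝕋c, ℝ) := ContinuousMap.mk (fun x => 1 - f x)
      (continuous_const.sub f.continuous) with hhdef
    have hh0 : ∀ x, 0 ≤ h x := fun x => by
      have := (hficc x).2; simp only [hhdef, ContinuousMap.coe_mk]; linarith
    have hh1 : ∀ x, h x ≤ 1 := fun x => by
      have := (hficc x).1; simp only [hhdef, ContinuousMap.coe_mk]; linarith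
    have hhK : ∀ x ∈ F, h x = 1 := fun x hx => by
      simp only [hhdef, ContinuousMap.coe_mk, hf0 hx]; simp
    have hhU : ∀ x ∉ U, h x = 0 := fun x hx => by
      have : f x = 1 := hf1 hx
      simp only [hhdef, ContinuousMap.coe_mk, this]; ring
    have hmh : Measurable fun x => ENNReal.ofReal (h x) :=
      h.continuous.measurable.ennreal_ofReal
    calc ν F = ∫⁻ x, F.indicator 1 x ∂ν := (lintegral_indicator_one hF.measurableSet).symm
      _ ≤ ∫⁻ x, ENNReal.ofReal (h x) ∂ν := by
          refine lintegral_mono fun x => ?_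
          by_cases hx : x ∈ F
          · simp [Set.indicator_of_mem hx, hhK x hx]
          · simp [Set.indicator_of_notMem hx]
      _ = ∫⁻ x, D x * ENNReal.ofReal (h x) ∂μc := by
          rw [hνdef, lintegral_withDensity_eq_lintegral_mul μc hDm hmh]
          rfl
      _ ≤ ENNReal.ofReal (C^2) * ∫⁻ x, ENNReal.ofReal (h x) ∂μc := H2 h hh0
      _ ≤ ENNReal.ofReal (C^2) * μc U := by
          refine mul_le_mul_right ?_ _
          calc ∫⁻ x, ENNReal.ofReal (h x) ∂μc ≤ ∫⁻ x, U.indicator 1 x ∂μc := by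
                refine lintegral_mono fun x => ?_
                by_cases hx : x ∈ U
                · simp only [Set.indicator_of_mem hx, Pi.one_apply]
                  exact ENNReal.ofReal_le_one.mpr (hh1 x)
                · simp [Set.indicator_of_notMem hx, hhU x hx]
            _ = μc U := lintegral_indicator_one hU.measurableSet
  have hν_all : ∀ E : Set 𝕋c, ν E ≤ ENNReal.ofReal (C^2) * μc E := by
    intro E
    refine ENNReal.le_of_forall_pos_le_add fun ε hε hfin => ?_
    set ε' : ℝ≥0∞ := ENNReal.ofReal ((ε : ℝ) / (C^2 + 1)) with hε'def
    have hε'pos : ε' ≠ 0 := by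
      rw [hε'def]
      simp only [ne_eq, ENNReal.ofReal_eq_zero, not_le]
      positivity
    obtain ⟨U, hEU, hUopen, hU⟩ :=
      Set.exists_isOpen_lt_add E (measure_ne_top μc E) hε'pos
    calc ν E ≤ ν U := measure_mono hEU
      _ ≤ ENNReal.ofReal (C^2) * μc U := hν_open U hUopen
      _ ≤ ENNReal.ofReal (C^2) * (μc E + ε') := mul_le_mul_right hU.le _
      _ = ENNReal.ofReal (C^2) * μc E + ENNReal.ofReal (C^2) * ε' := by ring
      _ ≤ ENNReal.ofReal (C^2) * μc E + (ε : ℝ≥0∞) := by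
          refine add_le_add_right ?_ _
          rw [hε'def, ← ENNReal.ofReal_mul (by positivity)]
          rw [show ((ε:ℝ≥0∞)) = ENNReal.ofReal (ε:ℝ) by rw [ENNReal.ofReal_coe_nnreal]]
          refine ENNReal.ofReal_le_ofReal ?_
          calc C^2 * ((ε:ℝ) / (C^2 + 1)) = (ε:ℝ) * (C^2 / (C^2+1)) := by ring
            _ ≤ (ε:ℝ) * 1 := by
                refine mul_le_mul_of_nonneg_left ?_ (ε.coe_nonneg)
                rw [div_le_one (by positivity)]; linarith
            _ = (ε:ℝ) := mul_one _
  -- Step 4: conclude the a.e. bound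
  have hA4 : ∀ n : ℕ, μc {x | C + 1/(n+1:ℝ) ≤ ‖w x‖} = 0 := by
    intro n
    set t : ℝ := C + 1/(n+1:ℝ) with htdef
    have hinv : (0:ℝ) < 1/(n+1:ℝ) := by positivity
    have htC : C < t := by rw [htdef]; linarith
    have htnn : (0:ℝ) ≤ t := by linarith
    set A := {x | t ≤ ‖w x‖} with hAdef
    have hAm : MeasurableSet A :=
      measurableSet_le measurable_const hsm.measurable.norm
    by_contra h0
    have hν1 : ENNReal.ofReal (t^2) * μc A ≤ ν A := by
      rw [hνdef, withDensity_apply _ hAm]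
      calc ENNReal.ofReal (t^2) * μc A = ∫⁻ _ in A, ENNReal.ofReal (t^2) ∂μc :=
            (setLIntegral_const A _).symm
        _ ≤ ∫⁻ x in A, D x ∂μc := by
            refine setLIntegral_mono hDm fun x hx => ?_
            have hx' : t ≤ ‖w x‖ := hx
            rw [hDdef]
            simp only
            rw [← enorm_eq_nnnorm, ← ofReal_norm, ← ENNReal.ofReal_pow (norm_nonneg _)]
            exact ENNReal.ofReal_le_ofReal (by nlinarith)
    have hν2 := hν_all A
    have hμA : μc A ≠ ∞ := measure_ne_top _ _
    have hle := (ENNReal.mul_le_mul_iff_left h0 hμA).mp (hν1.trans hν2)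
    have hle2 : t^2 ≤ C^2 := by
      rw [ENNReal.ofReal_le_ofReal_iff (by positivity)] at hle
      exact hle
    nlinarith
  have hsub : {x | ¬ ‖w x‖ ≤ C} ⊆ ⋃ n : ℕ, {x | C + 1/(n+1:ℝ) ≤ ‖w x‖} := by
    intro x hx
    simp only [Set.mem_setOf_eq, not_le] at hx
    obtain ⟨n, hn⟩ := exists_nat_one_div_lt (show (0:ℝ) < ‖w x‖ - C by linarith)
    refine Set.mem_iUnion.mpr ⟨n, ?_⟩
    simp only [Set.mem_setOf_eq]
    linarith
  rw [ae_iff]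
  exact measure_mono_null hsub (measure_iUnion_null fun n => hA4 n)

end Analytic


section Converse

open Filter

lemma norm_fourier' (n : ℤ) (x : 𝕋c) : ‖@fourier (2*Real.pi) n x‖ = 1 := by
  simp only [fourier_apply, Circle.norm_coe]

lemma integrable_fourier' (n : ℤ) : Integrable (⇑(@fourier (2*Real.pi) n)) μc :=
  memLp_one_iff_integrable.mp
    ((memLp_top_of_bound (fourier n).continuous.aestronglyMeasurable 1
      (Eventually.of_forall fun x => (norm_fourier' n x).le)).mono_exponent le_top)

lemma coeff_finset_sum {ι : Type*} (s : Finset ι) (F : ι → 𝕋c → ℂ)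
    (hF : ∀ i ∈ s, Integrable (F i) μc) (m : ℤ) :
    fourierCoeff (fun x => ∑ i ∈ s, F i x) m = ∑ i ∈ s, fourierCoeff (F i) m := by
  show ∫ t, fourier (-m) t • (∑ i ∈ s, F i t) ∂μc = _
  calc ∫ t, fourier (-m) t • (∑ i ∈ s, F i t) ∂μc
      = ∫ t, ∑ i ∈ s, fourier (-m) t • F i t ∂μc := by
        refine integral_congr_ae (Eventually.of_forall fun x => ?_)
        exact Finset.smul_sum
    _ = ∑ i ∈ s, ∫ t, fourier (-m) t • F i t ∂μc := by
        refine integral_finset_sum s fun i hi => ?_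
        have h2 := (hF i hi).bdd_mul (fourier (-m)).continuous.aestronglyMeasurable
          (Eventually.of_forall fun x => (norm_fourier' (-m) x).le)
        simpa [smul_eq_mul] using h2
    _ = ∑ i ∈ s, fourierCoeff (F i) m := rfl

lemma coeff_fourier (k m : ℤ) :
    fourierCoeff (⇑(@fourier (2*Real.pi) k)) m = if m = k then 1 else 0 := by
  rw [← fourierCoeff_congr_ae (coeFn_basis k) m, ← repr_eq, repr_basis]

lemma key_generic (X : L2 →L[ℂ] L2) (e : ℤ → ℂ)
    (he : ∀ S : Finset ℤ, ∃ t : ℤ, ∀ m ∈ S, ∀ k : ℤ,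
      eB.repr (X (eB (k+t))) (m+t) = e (m - k)) (γ : ℤ →₀ ℂ) (S : Finset ℤ) :
    ∑ m ∈ S, ‖∑ k ∈ γ.support, γ k * e (m - k)‖^2
      ≤ ‖X‖^2 * ∑ k ∈ γ.support, ‖γ k‖^2 := by
  classical
  obtain ⟨t, ht⟩ := he S
  set u : L2 := ∑ k ∈ γ.support, γ k • (eB (k+t) : L2) with hu
  have hon : Orthonormal ℂ (fun k : ℤ => (eB (k+t) : L2)) :=
    eB.orthonormal.comp _ fun x y hxy => by omega
  have hnorm : ‖u‖^2 = ∑ k ∈ γ.support, ‖γ k‖^2 := by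
    have hinner : ⟪u, u⟫_ℂ = ∑ k ∈ γ.support, (starRingEnd ℂ) (γ k) * γ k := by
      rw [hu]; exact hon.inner_sum γ γ γ.support
    rw [← inner_self_eq_norm_sq (𝕜 := ℂ), hinner, map_sum]
    refine Finset.sum_congr rfl fun k _ => ?_
    rw [RCLike.conj_mul, ← RCLike.ofReal_pow, RCLike.ofReal_re]
  have hXu : ∀ m ∈ S, eB.repr (X u) (m+t) = ∑ k ∈ γ.support, γ k * e (m - k) := by
    intro m hm
    have h1 : X u = ∑ k ∈ γ.support, γ k • X (eB (k+t)) := by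
      rw [hu, map_sum]
      exact Finset.sum_congr rfl fun k _ => by rw [_root_.map_smul]
    rw [h1, map_sum, lp.coeFn_sum, Finset.sum_apply]
    refine Finset.sum_congr rfl fun k hk => ?_
    rw [_root_.map_smul, lp.coeFn_smul, Pi.smul_apply, ht m hm k]
    simp [smul_eq_mul]
  have himg : ∑ m' ∈ S.image (· + t), ‖eB.repr (X u) m'‖^2
      = ∑ m ∈ S, ‖∑ k ∈ γ.support, γ k * e (m - k)‖^2 := by
    rw [Finset.sum_image (fun x _ y _ h => by omega)]
    exact Finset.sum_congr rfl fun m hm => by rw [hXu m hm]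
  have hbes : ∑ m' ∈ S.image (· + t), ‖eB.repr (X u) m'‖^2 ≤ ‖X u‖^2 := by
    have h1 := lp.sum_rpow_le_norm_rpow (p := (2:ℝ≥0∞)) (by norm_num)
      (eB.repr (X u)) (S.image (· + t))
    have hc2 : ((2:ℝ≥0∞).toReal) = ((2:ℕ):ℝ) := by norm_num
    rw [hc2] at h1
    simp_rw [Real.rpow_natCast] at h1
    calc ∑ m' ∈ S.image (· + t), ‖eB.repr (X u) m'‖^2 ≤ ‖eB.repr (X u)‖^2 := h1
      _ = ‖X u‖^2 := by rw [eB.repr.norm_map (X u)]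
  calc ∑ m ∈ S, ‖∑ k ∈ γ.support, γ k * e (m - k)‖^2
      = ∑ m' ∈ S.image (· + t), ‖eB.repr (X u) m'‖^2 := himg.symm
    _ ≤ ‖X u‖^2 := hbes
    _ ≤ (‖X‖ * ‖u‖)^2 := pow_le_pow_left₀ (norm_nonneg _) (X.le_opNorm u) 2
    _ = ‖X‖^2 * ‖u‖^2 := mul_pow _ _ 2
    _ = ‖X‖^2 * ∑ k ∈ γ.support, ‖γ k‖^2 := by rw [hnorm]

lemma span_bound_of_key (w : 𝕋c → ℂ) (hw : MemLp w 2 μc) (CX : ℝ) (hCX : 0 ≤ CX)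
    (Key : ∀ (γ : ℤ →₀ ℂ) (S : Finset ℤ),
      ∑ m ∈ S, ‖∑ k ∈ γ.support, γ k * fourierCoeff w (m - k)‖^2
        ≤ CX^2 * ∑ k ∈ γ.support, ‖γ k‖^2) :
    ∀ g : C(𝕋c, ℂ), g ∈ Submodule.span ℂ (Set.range (@fourier (2*Real.pi))) →
      eLpNorm (fun x => w x * g x) 2 μc ≤ ENNReal.ofReal CX * eLpNorm (⇑g) 2 μc := by
  intro g hg
  classical
  obtain ⟨γ, hγ⟩ := Finsupp.mem_span_range_iff_exists_finsupp.mp hg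
  have hgx : ∀ x, g x = ∑ k ∈ γ.support, γ k * fourier k x := by
    intro x
    rw [← hγ, Finsupp.sum]
    have h1 : ⇑(∑ k ∈ γ.support, γ k • (fourier k : C(𝕋c, ℂ)))
        = ∑ k ∈ γ.support, ⇑(γ k • (fourier k : C(𝕋c, ℂ))) :=
      map_sum ContinuousMap.coeFnAddMonoidHom _ _
    rw [h1, Finset.sum_apply]
    exact Finset.sum_congr rfl fun k _ => by
      rw [ContinuousMap.coe_smul, Pi.smul_apply, smul_eq_mul]
  have hgmem : MemLp (⇑g) ∞ μc := memLp_top_of_bound g.continuous.aestronglyMeasurable ‖g‖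
    (Eventually.of_forall fun x => g.norm_coe_le_norm x)
  have hwp : MemLp (fun x => w x * g x) 2 μc := by
    have h1 : (fun x => w x * g x) = (⇑g • w) := by
      funext x; simp [mul_comm]
    rw [h1]
    exact hw.smul hgmem
  have hwint : Integrable w μc := hw.integrable one_le_two
  have hcoeffs : ∀ m : ℤ, fourierCoeff (fun x => w x * g x) m
      = ∑ k ∈ γ.support, γ k * fourierCoeff w (m - k) := by
    intro m
    have h1 : (fun x => w x * g x) = fun x => ∑ k ∈ γ.support, γ k * (w x * fourier k x) := by
      funext x
      rw [hgx x, Finset.mul_sum]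
      exact Finset.sum_congr rfl fun k _ => by ring
    rw [h1, coeff_finset_sum]
    · exact Finset.sum_congr rfl fun k _ => by
        rw [fourierCoeff.const_mul, coeff_mul_fourier]
    · intro k _
      have h2 : Integrable (fun x => fourier k x * w x) μc :=
        hwint.bdd_mul (fourier k).continuous.aestronglyMeasurable
          (Eventually.of_forall fun x => (norm_fourier' k x).le)
      have h3 : Integrable (fun x => w x * fourier k x) μc := by
        have h4 : (fun x => w x * fourier k x) = fun x => fourier k x * w x := by
          funext x; ring
        rw [h4]; exact h2
      exact h3.const_mul (γ k)
  -- Parseval conversions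
  have hrp : ∀ r : ℝ, r ^ ((2:ℝ≥0∞).toReal) = r^(2:ℕ) := fun r => by
    rw [ENNReal.toReal_ofNat, show (2:ℝ) = ((2:ℕ):ℝ) by norm_num, Real.rpow_natCast]
  set W := hwp.toLp _ with hW
  have hreprW : ∀ m, eB.repr W m = ∑ k ∈ γ.support, γ k * fourierCoeff w (m - k) := by
    intro m
    rw [repr_eq, fourierCoeff_congr_ae hwp.coeFn_toLp m]
    exact hcoeffs m
  have hWsq : ‖W‖^2 = ∑' m : ℤ, ‖eB.repr W m‖^2 := by
    have h1 : ‖W‖ = ‖eB.repr W‖ := (eB.repr.norm_map W).symm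
    have h2 := lp.norm_rpow_eq_tsum (p := (2:ℝ≥0∞)) (by norm_num) (eB.repr W)
    rw [h1]
    calc ‖eB.repr W‖^(2:ℕ) = ‖eB.repr W‖ ^ ((2:ℝ≥0∞).toReal) := (hrp _).symm
      _ = ∑' m : ℤ, ‖eB.repr W m‖ ^ ((2:ℝ≥0∞).toReal) := h2
      _ = ∑' m : ℤ, ‖eB.repr W m‖^(2:ℕ) := by
          exact tsum_congr fun m => hrp _
  have hsumW : Summable fun m : ℤ => ‖eB.repr W m‖^2 := by
    have h1 := (lp.memℓp (eB.repr W)).summable (p := (2:ℝ≥0∞)) (by norm_num)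
    have h2 : (fun m : ℤ => ‖eB.repr W m‖ ^ ((2:ℝ≥0∞).toReal))
        = fun m : ℤ => ‖eB.repr W m‖^(2:ℕ) := funext fun m => hrp _
    rwa [h2] at h1
  have htsum : ∑' m : ℤ, ‖eB.repr W m‖^2 ≤ CX^2 * ∑ k ∈ γ.support, ‖γ k‖^2 := by
    refine Summable.tsum_le_of_sum_le hsumW fun S => ?_
    calc ∑ m ∈ S, ‖eB.repr W m‖^2
        = ∑ m ∈ S, ‖∑ k ∈ γ.support, γ k * fourierCoeff w (m - k)‖^2 :=
          Finset.sum_congr rfl fun m _ => by rw [hreprW]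
      _ ≤ CX^2 * ∑ k ∈ γ.support, ‖γ k‖^2 := Key γ S
  -- the norm of g in L2
  have hg2 : MemLp (⇑g) 2 μc := hgmem.mono_exponent le_top
  set G := hg2.toLp _ with hG
  have hreprG : ∀ m, eB.repr G m = γ m := by
    intro m
    rw [repr_eq, fourierCoeff_congr_ae hg2.coeFn_toLp m]
    have h1 : (⇑g : 𝕋c → ℂ) = fun x => ∑ k ∈ γ.support, γ k * fourier k x := funext hgx
    rw [h1, coeff_finset_sum]
    · rw [Finset.sum_congr rfl fun k (_ : k ∈ γ.support) => by
        rw [fourierCoeff.const_mul, coeff_fourier]]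
      by_cases hm : m ∈ γ.support
      · rw [Finset.sum_eq_single m]
        · simp
        · intro b _ hbm
          simp [Ne.symm hbm]
        · intro hmm; exact absurd hm hmm
      · rw [Finset.sum_eq_zero]
        · exact (Finsupp.notMem_support_iff.mp hm).symm
        · intro b hb
          have : m ≠ b := fun h => hm (h ▸ hb)
          simp [this]
    · intro k _
      exact (integrable_fourier' k).const_mul (γ k)
  have hGsq : ‖G‖^2 = ∑ k ∈ γ.support, ‖γ k‖^2 := by
    have h1 : ‖G‖ = ‖eB.repr G‖ := (eB.repr.norm_map G).symm
    have h2 := lp.norm_rpow_eq_tsum (p := (2:ℝ≥0∞)) (by norm_num) (eB.repr G)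
    have h3 : ∑' m : ℤ, ‖eB.repr G m‖^2 = ∑ k ∈ γ.support, ‖γ k‖^2 := by
      rw [tsum_eq_sum (s := γ.support) (fun m hm => ?_)]
      · exact Finset.sum_congr rfl fun k _ => by rw [hreprG]
      · rw [hreprG, Finsupp.notMem_support_iff.mp hm]
        simp
    rw [h1]
    calc ‖eB.repr G‖^(2:ℕ) = ‖eB.repr G‖ ^ ((2:ℝ≥0∞).toReal) := (hrp _).symm
      _ = ∑' m : ℤ, ‖eB.repr G m‖ ^ ((2:ℝ≥0∞).toReal) := h2
      _ = ∑' m : ℤ, ‖eB.repr G m‖^(2:ℕ) := tsum_congr fun m => hrp _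
      _ = ∑ k ∈ γ.support, ‖γ k‖^2 := h3
  have hfinal : ‖W‖ ≤ CX * ‖G‖ := by
    have h1 : ‖W‖^2 ≤ (CX * ‖G‖)^2 := by
      rw [mul_pow, hGsq, hWsq]
      exact htsum
    calc ‖W‖ = Real.sqrt (‖W‖^2) := (Real.sqrt_sq (norm_nonneg W)).symm
      _ ≤ Real.sqrt ((CX * ‖G‖)^2) := Real.sqrt_le_sqrt h1
      _ = CX * ‖G‖ := Real.sqrt_sq (by positivity)
  have hWnorm : eLpNorm (fun x => w x * g x) 2 μc = ENNReal.ofReal ‖W‖ := by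
    rw [hW, Lp.norm_toLp, ENNReal.ofReal_toReal hwp.2.ne]
  have hGnorm : eLpNorm (⇑g) 2 μc = ENNReal.ofReal ‖G‖ := by
    rw [hG, Lp.norm_toLp, ENNReal.ofReal_toReal hg2.2.ne]
  rw [hWnorm, hGnorm, ← ENNReal.ofReal_mul hCX]
  exact ENNReal.ofReal_le_ofReal hfinal

end Converse


section ConverseMain

open Filter

lemma converse_dir (X : L2 →L[ℂ] L2)
    (hX : X = Pplus.comp (MzStar.comp (X.comp Mz)) + Pminus.comp (Mz.comp (X.comp MzStar))) :
    ∃ (φ ψ : 𝕋c → ℂ) (hφ : MemLp φ ∞ μc) (hψ : MemLp ψ ∞ μc),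
      X = Pplus.comp (Mop φ hφ) + Pminus.comp (Mop ψ hψ) := by
  classical
  set a : ℤ → ℤ → ℂ := fun m n => eB.repr (X (eB n)) m with ha
  have hR : ∀ m n : ℤ, a m n = if 0 ≤ m then a (m+1) (n+1) else a (m-1) (n-1) := by
    intro m n
    have h1 : X (eB n) = (Pplus.comp (MzStar.comp (X.comp Mz))
        + Pminus.comp (Mz.comp (X.comp MzStar))) (eB n) := by conv_lhs => rw [hX]
    show eB.repr (X (eB n)) m = _
    rw [h1, repr_RHS]
  have hR1 : ∀ m n, 0 ≤ m → a m n = a (m+1) (n+1) := fun m n hm => by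
    rw [hR m n, if_pos hm]
  have hR2 : ∀ m n, m < 0 → a m n = a (m-1) (n-1) := fun m n hm => by
    rw [hR m n, if_neg (by omega)]
  have hRup : ∀ (j : ℕ) (m n : ℤ), 0 ≤ m → a m n = a (m + j) (n + j) := by
    intro j
    induction j with
    | zero => intro m n _; norm_num
    | succ i ih =>
      intro m n hm
      have h1 := ih m n hm
      have h2 := hR1 (m + i) (n + i) (by omega)
      rw [show (m + ((i+1:ℕ):ℤ)) = (m + i) + 1 by push_cast; ring,
        show (n + ((i+1:ℕ):ℤ)) = (n + i) + 1 by push_cast; ring]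
      exact h1.trans h2
  have hRdn : ∀ (j : ℕ) (m n : ℤ), m < 0 → a m n = a (m - j) (n - j) := by
    intro j
    induction j with
    | zero => intro m n _; norm_num
    | succ i ih =>
      intro m n hm
      have h1 := ih m n hm
      have h2 := hR2 (m - i) (n - i) (by omega)
      rw [show (m - ((i+1:ℕ):ℤ)) = (m - i) - 1 by push_cast; ring,
        show (n - ((i+1:ℕ):ℤ)) = (n - i) - 1 by push_cast; ring]
      exact h1.trans h2
  have hup2 : ∀ (m m' n : ℤ), 0 ≤ m → m ≤ m' → a m n = a m' (n + (m' - m)) := by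
    intro m m' n hm hmm
    have h1 := hRup (m' - m).toNat m n hm
    rw [show (m + ((m' - m).toNat:ℤ)) = m' by omega,
      show (n + ((m' - m).toNat:ℤ)) = n + (m' - m) by omega] at h1
    exact h1
  have hdn2 : ∀ (m m' n : ℤ), m < 0 → m' ≤ m → a m n = a m' (n - (m - m')) := by
    intro m m' n hm hmm
    have h1 := hRdn (m - m').toNat m n hm
    rw [show (m - ((m - m').toNat:ℤ)) = m' by omega,
      show (n - ((m - m').toNat:ℤ)) = n - (m - m') by omega] at h1
    exact h1
  set c : ℤ → ℂ := fun k => a (max k 0) (max k 0 - k) with hc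
  set d : ℤ → ℂ := fun k => a (min k (-1)) (min k (-1) - k) with hd
  have hHc : ∀ m n : ℤ, 0 ≤ m → a m n = c (m - n) := by
    intro m n hm
    show a m n = a (max (m-n) 0) (max (m-n) 0 - (m-n))
    set M := max (max (m-n) 0) m with hM
    have h1 : a m n = a M (n + (M - m)) := hup2 m M n hm (by omega)
    have h2 : a (max (m-n) 0) (max (m-n) 0 - (m-n))
        = a M ((max (m-n) 0 - (m-n)) + (M - max (m-n) 0)) :=
      hup2 _ M _ (by omega) (by omega)
    rw [h1, h2, show (max (m-n) 0 - (m-n)) + (M - max (m-n) 0) = n + (M - m) by omega]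
  have hHd : ∀ m n : ℤ, m < 0 → a m n = d (m - n) := by
    intro m n hm
    show a m n = a (min (m-n) (-1)) (min (m-n) (-1) - (m-n))
    set M := min (min (m-n) (-1)) m with hM
    have h1 : a m n = a M (n - (m - M)) := hdn2 m M n hm (by omega)
    have h2 : a (min (m-n) (-1)) (min (m-n) (-1) - (m-n))
        = a M ((min (m-n) (-1) - (m-n)) - (min (m-n) (-1) - M)) :=
      hdn2 _ M _ (by omega) (by omega)
    rw [h1, h2, show (min (m-n) (-1) - (m-n)) - (min (m-n) (-1) - M) = n - (m - M) by omega]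
  have hkeyc : ∀ S : Finset ℤ, ∃ t : ℤ, ∀ m ∈ S, ∀ k : ℤ,
      eB.repr (X (eB (k+t))) (m+t) = c (m - k) := by
    intro S
    set t : ℤ := ((S.sup fun m => (-m).toNat : ℕ) : ℤ) with htdef
    refine ⟨t, fun m hm k => ?_⟩
    have h1 : (-m).toNat ≤ S.sup (fun m => (-m).toNat) := Finset.le_sup (f := fun m : ℤ => (-m).toNat) hm
    have h2 : ((-m).toNat : ℤ) ≤ t := by rw [htdef]; exact_mod_cast h1
    have h3 : (-m : ℤ) ≤ ((-m).toNat : ℤ) := Int.self_le_toNat _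
    have h0 : 0 ≤ m + t := by omega
    show a (m+t) (k+t) = c (m - k)
    rw [hHc (m+t) (k+t) h0, show (m + t) - (k + t) = m - k by ring]
  have hkeyd : ∀ S : Finset ℤ, ∃ t : ℤ, ∀ m ∈ S, ∀ k : ℤ,
      eB.repr (X (eB (k+t))) (m+t) = d (m - k) := by
    intro S
    set t : ℤ := -((S.sup fun m => (m+1).toNat : ℕ) : ℤ) with htdef
    refine ⟨t, fun m hm k => ?_⟩
    have h1 : (m+1).toNat ≤ S.sup (fun m => (m+1).toNat) := Finset.le_sup (f := fun m : ℤ => (m+1).toNat) hm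
    have h2 : (((m+1).toNat : ℕ) : ℤ) ≤ ((S.sup fun m => (m+1).toNat : ℕ) : ℤ) := by
      exact_mod_cast h1
    have h3 : (m + 1 : ℤ) ≤ ((m+1).toNat : ℤ) := Int.self_le_toNat _
    have h0 : m + t < 0 := by omega
    show a (m+t) (k+t) = d (m - k)
    rw [hHd (m+t) (k+t) h0, show (m + t) - (k + t) = m - k by ring]
  -- ℓ² membership of the coefficient sequences
  have hsingle : (Finsupp.single (0:ℤ) (1:ℂ)).support = {0} :=
    Finsupp.support_single_ne_zero _ one_ne_zero
  have hbound_c : ∀ S : Finset ℤ, ∑ m ∈ S, ‖c m‖^2 ≤ ‖X‖^2 := by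
    intro S
    have hkey := key_generic X c hkeyc (Finsupp.single 0 1) S
    rw [hsingle] at hkey
    simp only [Finset.sum_singleton, Finsupp.single_eq_same, one_mul, sub_zero, norm_one,
      one_pow, mul_one] at hkey
    exact hkey
  have hbound_d : ∀ S : Finset ℤ, ∑ m ∈ S, ‖d m‖^2 ≤ ‖X‖^2 := by
    intro S
    have hkey := key_generic X d hkeyd (Finsupp.single 0 1) S
    rw [hsingle] at hkey
    simp only [Finset.sum_singleton, Finsupp.single_eq_same, one_mul, sub_zero, norm_one,
      one_pow, mul_one] at hkey
    exact hkey
  have hrp : ∀ r : ℝ, r ^ ((2:ℝ≥0∞).toReal) = r^(2:ℕ) := fun r => by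
    rw [ENNReal.toReal_ofNat, show (2:ℝ) = ((2:ℕ):ℝ) by norm_num, Real.rpow_natCast]
  have hmemc : Memℓp c 2 := by
    refine memℓp_gen' (C := ‖X‖^2) fun S => ?_
    rw [Finset.sum_congr rfl fun m _ => hrp (‖c m‖)]
    exact hbound_c S
  have hmemd : Memℓp d 2 := by
    refine memℓp_gen' (C := ‖X‖^2) fun S => ?_
    rw [Finset.sum_congr rfl fun m _ => hrp (‖d m‖)]
    exact hbound_d S
  set Φ : L2 := eB.repr.symm ⟨c, hmemc⟩ with hΦ
  set Ψ : L2 := eB.repr.symm ⟨d, hmemd⟩ with hΨ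
  have hreprΦ : ∀ k, eB.repr Φ k = c k := fun k => by
    rw [hΦ, LinearIsometryEquiv.apply_symm_apply]
  have hreprΨ : ∀ k, eB.repr Ψ k = d k := fun k => by
    rw [hΨ, LinearIsometryEquiv.apply_symm_apply]

  have hcoeffΦ : ∀ k, fourierCoeff (⇑Φ) k = c k := fun k => by rw [← repr_eq, hreprΦ]
  have hcoeffΨ : ∀ k, fourierCoeff (⇑Ψ) k = d k := fun k => by rw [← repr_eq, hreprΨ]
  have hw2Φ : MemLp (⇑Φ) 2 μc := Lp.memLp Φ
  have hw2Ψ : MemLp (⇑Ψ) 2 μc := Lp.memLp Ψ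
  have hKeyΦ : ∀ (γ : ℤ →₀ ℂ) (S : Finset ℤ),
      ∑ m ∈ S, ‖∑ k ∈ γ.support, γ k * fourierCoeff (⇑Φ) (m - k)‖^2
        ≤ ‖X‖^2 * ∑ k ∈ γ.support, ‖γ k‖^2 := by
    intro γ S
    have h2 : ∀ m : ℤ, (∑ k ∈ γ.support, γ k * fourierCoeff (⇑Φ) (m - k))
        = ∑ k ∈ γ.support, γ k * c (m - k) :=
      fun m => Finset.sum_congr rfl fun k _ => by rw [hcoeffΦ]
    calc ∑ m ∈ S, ‖∑ k ∈ γ.support, γ k * fourierCoeff (⇑Φ) (m-k)‖^2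
        = ∑ m ∈ S, ‖∑ k ∈ γ.support, γ k * c (m-k)‖^2 :=
          Finset.sum_congr rfl fun m _ => by rw [h2]
      _ ≤ ‖X‖^2 * ∑ k ∈ γ.support, ‖γ k‖^2 := key_generic X c hkeyc γ S
  have hKeyΨ : ∀ (γ : ℤ →₀ ℂ) (S : Finset ℤ),
      ∑ m ∈ S, ‖∑ k ∈ γ.support, γ k * fourierCoeff (⇑Ψ) (m - k)‖^2
        ≤ ‖X‖^2 * ∑ k ∈ γ.support, ‖γ k‖^2 := by
    intro γ S
    have h2 : ∀ m : ℤ, (∑ k ∈ γ.support, γ k * fourierCoeff (⇑Ψ) (m - k))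
        = ∑ k ∈ γ.support, γ k * d (m - k) :=
      fun m => Finset.sum_congr rfl fun k _ => by rw [hcoeffΨ]
    calc ∑ m ∈ S, ‖∑ k ∈ γ.support, γ k * fourierCoeff (⇑Ψ) (m-k)‖^2
        = ∑ m ∈ S, ‖∑ k ∈ γ.support, γ k * d (m-k)‖^2 :=
          Finset.sum_congr rfl fun m _ => by rw [h2]
      _ ≤ ‖X‖^2 * ∑ k ∈ γ.support, ‖γ k‖^2 := key_generic X d hkeyd γ S
  have haeΦ : ∀ᵐ x ∂μc, ‖(⇑Φ : 𝕋c → ℂ) x‖ ≤ ‖X‖ :=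
    ae_bound_of_span_bound (⇑Φ) (Lp.stronglyMeasurable Φ) hw2Φ ‖X‖ (norm_nonneg X)
      (span_bound_of_key (⇑Φ) hw2Φ ‖X‖ (norm_nonneg X) hKeyΦ)
  have haeΨ : ∀ᵐ x ∂μc, ‖(⇑Ψ : 𝕋c → ℂ) x‖ ≤ ‖X‖ :=
    ae_bound_of_span_bound (⇑Ψ) (Lp.stronglyMeasurable Ψ) hw2Ψ ‖X‖ (norm_nonneg X)
      (span_bound_of_key (⇑Ψ) hw2Ψ ‖X‖ (norm_nonneg X) hKeyΨ)
  have hphiTop : MemLp (⇑Φ) ∞ μc := memLp_top_of_bound (Lp.aestronglyMeasurable Φ) ‖X‖ haeΦ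
  have hpsiTop : MemLp (⇑Ψ) ∞ μc := memLp_top_of_bound (Lp.aestronglyMeasurable Ψ) ‖X‖ haeΨ
  refine ⟨⇑Φ, ⇑Ψ, hphiTop, hpsiTop, ?_⟩
  apply clm_ext_basis
  intro n
  apply elt_ext_repr
  intro m
  rw [repr_pair]
  by_cases hm : 0 ≤ m
  · rw [if_pos hm, hcoeffΦ]
    exact hHc m n hm
  · rw [if_neg hm, hcoeffΨ]
    exact hHd m n (by omega)

end ConverseMain


/-- **Theorem.** `X ∈ B(L²(𝕋))` is a transposed paired operator `Σ_{φ,ψ} = P₊ M_φ + P₋ M_ψ`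
if and only if `X = P₊ M_z* X M_z + P₋ M_z X M_z*`; moreover the representing functions are
unique (as elements of `L∞(𝕋)`, i.e. up to a.e. equality). -/
theorem transposed_paired_operator_iff (X : L2 →L[ℂ] L2) :
    ((∃ (φ ψ : 𝕋c → ℂ) (hφ : MemLp φ ∞ μc) (hψ : MemLp ψ ∞ μc),
        X = Pplus.comp (Mop φ hφ) + Pminus.comp (Mop ψ hψ)) ↔
      X = Pplus.comp (MzStar.comp (X.comp Mz)) + Pminus.comp (Mz.comp (X.comp MzStar))) ∧
    ∀ (φ ψ φ₁ ψ₁ : 𝕋c → ℂ) (hφ : MemLp φ ∞ μc) (hψ : MemLp ψ ∞ μc)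
        (hφ₁ : MemLp φ₁ ∞ μc) (hψ₁ : MemLp ψ₁ ∞ μc),
      Pplus.comp (Mop φ hφ) + Pminus.comp (Mop ψ hψ) =
          Pplus.comp (Mop φ₁ hφ₁) + Pminus.comp (Mop ψ₁ hψ₁) →
      φ =ᵐ[μc] φ₁ ∧ ψ =ᵐ[μc] ψ₁ := by
  constructor
  · constructor
    · rintro ⟨φ, ψ, hφ, hψ, hXeq⟩
      exact forward_dir hφ hψ X hXeq
    · intro hXeq
      exact converse_dir X hXeq
  · intro φ ψ φ₁ ψ₁ hφ hψ hφ₁ hψ₁ h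
    exact uniqueness_aux hφ hψ hφ₁ hψ₁ h

end PaperTH
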